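/- Suppose a > 0, 0 < b < 1, and x(k+1) − x(k) ≤ x(k+1)·(b − a·x(k − τ(k))) for all integers k ≥ k₀. Then limsup_{k→+∞} x(k) ≤ (b/a)·(1 − b)^{−τ̄}. (Discrete case, 𝕋 = ℤ, of Lemma 2.14(i) with d = 0.) -/

import Mathlib

set_option maxHeartbeats 800000


open Filter

/-- Discrete case (𝕋 = ℤ) of Lemma 2.14(i) with `d = 0`: if
`x(k+1) − x(k) ≤ x(k+1)(b − a x(k − τ(k)))` for `k ≥ k₀`, then
`limsup_{k→∞} x(k) ≤ (b/a)(1 − b)^{−τ̄}`. -/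
theorem limsup_le_of_delay_ineq_implicit_discrete_d_zero
    (a b : ℝ) (k₀ : ℤ) (τbar : ℕ) (τ : ℤ → ℕ) (x : ℤ → ℝ)
    (ha : 0 < a) (hb0 : 0 < b) (hb1 : b < 1)
    (hτ : ∀ k : ℤ, τ k ≤ τbar)
    (hxpos : ∀ k : ℤ, k₀ - (τbar : ℤ) ≤ k → 0 < x k)
    (hineq : ∀ k : ℤ, k₀ ≤ k →
      x (k + 1) - x k ≤ x (k + 1) * (b - a * x (k - (τ k : ℤ)))) :
    Filter.limsup (fun k : ℤ => ((x k : EReal))) Filter.atTop ≤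
      ((b / a * (1 - b) ^ (-(τbar : ℤ)) : ℝ) : EReal) := by
  have hb1' : 0 < 1 - b := by linarith
  set q : ℝ := (1 - b) ^ τbar with hq
  have hq0 : 0 < q := pow_pos hb1' _
  set M : ℝ := b / (a * q) with hMdef
  have hMeq : b / a * (1 - b) ^ (-(τbar : ℤ)) = M := by
    rw [zpow_neg, zpow_natCast, hMdef, hq]
    field_simp
  have hM0 : 0 < M := div_pos hb0 (mul_pos ha hq0)
  have hpos : ∀ k : ℤ, k₀ ≤ k → 0 < x k := fun k hk => hxpos k (by omega)
  -- rearranged inequality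
  have key0 : ∀ k : ℤ, k₀ ≤ k →
      x (k+1) * (1-b) + a * x (k+1) * x (k - (τ k : ℤ)) ≤ x k := by
    intro k hk
    have h := hineq k hk
    nlinarith [h]
  -- one-step decay
  have step : ∀ k : ℤ, k₀ ≤ k → (1-b) * x (k+1) ≤ x k := by
    intro k hk
    have h := key0 k hk
    have h1 : 0 < x (k+1) := hpos _ (by omega)
    have h2 : 0 < x (k - (τ k : ℤ)) := hxpos _ (by have := hτ k; omega)
    nlinarith [mul_pos (mul_pos ha h1) h2]
  -- iterated decay
  have iter : ∀ n : ℕ, ∀ k : ℤ, k₀ + n ≤ k → (1-b)^n * x k ≤ x (k - n) := by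
    intro n
    induction n with
    | zero => intro k hk; simp
    | succ n ih =>
      intro k hk
      have h1 : (1-b)^n * x k ≤ x (k - n) := ih k (by push_cast at hk ⊢; omega)
      have hk' : k₀ ≤ k - n - 1 := by push_cast at hk; omega
      have h2 : (1-b) * x (k - n - 1 + 1) ≤ x (k - n - 1) := step _ hk'
      have he : k - n - 1 + 1 = k - n := by ring
      rw [he] at h2
      have he2 : k - ((n : ℤ) + 1) = k - n - 1 := by ring
      have hxk : 0 < x k := hpos k (by push_cast at hk; omega)
      calc (1-b)^(n+1) * x k = (1-b) * ((1-b)^n * x k) := by ring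
        _ ≤ (1-b) * x (k - n) := by nlinarith
        _ ≤ x (k - n - 1) := h2
        _ = x (k - ((n : ℤ) + 1)) := by rw [he2]
  -- delay bound
  have hdel : ∀ k : ℤ, k₀ + (τbar : ℤ) ≤ k → q * x k ≤ x (k - (τ k : ℤ)) := by
    intro k hk
    have h1 : (1-b)^(τ k) * x k ≤ x (k - (τ k : ℤ)) := by
      apply iter
      have := hτ k; omega
    have h2 : q ≤ (1-b)^(τ k) := pow_le_pow_of_le_one hb1'.le (by linarith) (hτ k)
    have hxk : 0 < x k := hpos k (by omega)
    nlinarith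
  -- key inequality
  have key : ∀ k : ℤ, k₀ + (τbar : ℤ) ≤ k →
      x (k+1) * (1-b) + a * q * x (k+1) * x k ≤ x k := by
    intro k hk
    have h := key0 k (by omega)
    have h1 := hdel k hk
    have h2 : 0 < x (k+1) := hpos _ (by omega)
    nlinarith [mul_le_mul_of_nonneg_left h1 (by positivity : (0:ℝ) ≤ a * x (k+1))]
  -- uniform bound
  have hC : ∀ k : ℤ, k₀ + (τbar : ℤ) + 1 ≤ k → x k ≤ 1 / (a * q) := by
    intro k hk
    have h := key (k-1) (by omega)
    have he : k - 1 + 1 = k := by ring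
    rw [he] at h
    have h1 : 0 < x (k-1) := hpos _ (by omega)
    have h2 : 0 < x k := hpos _ (by omega)
    rw [le_div_iff₀ (mul_pos ha hq0)]
    nlinarith
  have hevC : ∀ᶠ k in atTop, x k ≤ 1 / (a * q) :=
    eventually_atTop.2 ⟨k₀ + (τbar : ℤ) + 1, hC⟩
  have hev0 : ∀ᶠ k in atTop, (0:ℝ) ≤ x k :=
    eventually_atTop.2 ⟨k₀, fun k hk => (hpos k hk).le⟩
  have hbdd : IsBoundedUnder (· ≤ ·) atTop x := ⟨1 / (a * q), eventually_map.2 hevC⟩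
  have hcobdd : IsCoboundedUnder (· ≤ ·) atTop x :=
    IsBoundedUnder.isCoboundedUnder_le ⟨0, eventually_map.2 hev0⟩
  set L : ℝ := limsup x atTop with hL
  -- main real estimate
  have hLM : L ≤ M := by
    by_cases hL0 : L ≤ 0
    · linarith
    push_neg at hL0
    by_contra hcon
    push_neg at hcon
    have hab : b < a * q * L := by
      have : a * q * M = b := by rw [hMdef]; field_simp
      nlinarith [mul_lt_mul_of_pos_left hcon (mul_pos ha hq0)]
    set D : ℝ := a * q * L^2 - b * L with hD
    have hD0 : 0 < D := by nlinarith
    set ε : ℝ := min (L/2) (min (D/4) (1/(a*q))) with hε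
    have hε0 : 0 < ε := by
      apply lt_min (by linarith) (lt_min (by linarith) (by positivity))
    have hε1 : ε ≤ L/2 := min_le_left _ _
    have hε2 : ε ≤ D/4 := le_trans (min_le_right _ _) (min_le_left _ _)
    have hε3 : ε ≤ 1/(a*q) := le_trans (min_le_right _ _) (min_le_right _ _)
    have hε3' : a * q * ε ≤ 1 := by
      rw [← le_div_iff₀' (mul_pos ha hq0)]; exact hε3
    have hev : ∀ᶠ k in atTop, x k < L + ε :=
      eventually_lt_of_limsup_lt (by rw [← hL]; linarith) hbdd
    obtain ⟨N, hN⟩ := eventually_atTop.1 hev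
    have hfreq : ∃ᶠ k in atTop, L - ε < x k :=
      frequently_lt_of_lt_limsup hcobdd (by rw [← hL]; linarith)
    obtain ⟨m, hm2, hm1⟩ :=
      (hfreq.and_eventually (eventually_ge_atTop (max (N+1) (k₀ + (τbar : ℤ) + 1)))).exists
    have hmN : N ≤ m - 1 := by
      have := le_trans (le_max_left (N+1) (k₀ + (τbar : ℤ) + 1)) hm1; omega
    have hmk : k₀ + (τbar : ℤ) ≤ m - 1 := by
      have := le_trans (le_max_right (N+1) (k₀ + (τbar : ℤ) + 1)) hm1; omega
    have hkey := key (m-1) hmk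
    have he : m - 1 + 1 = m := by ring
    rw [he] at hkey
    have hv1 : x (m-1) < L + ε := hN _ hmN
    have hv0 : 0 < x (m-1) := hpos _ (by omega)
    have hu : L - ε < x m := hm2
    -- (L-ε)(1-b) ≤ x(m-1) * (1 - a q (L-ε))
    have h1 : (L-ε) * (1-b) + a * q * (L-ε) * x (m-1) ≤ x (m-1) := by
      nlinarith [mul_pos ha hq0, hv0]
    have hLε : 0 < L - ε := by linarith
    rcases le_or_gt (1 - a*q*(L-ε)) 0 with hcase | hcase
    · nlinarith [mul_pos ha hq0]
    · -- x(m-1) * (1 - aq(L-ε)) < (L+ε)(1 - aq(L-ε))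
      have h2 : (L-ε) * (1-b) ≤ (L+ε) * (1 - a*q*(L-ε)) := by nlinarith
      nlinarith [mul_pos (mul_pos ha hq0) hε0]
  -- conclude in EReal
  rw [hMeq]
  apply le_of_forall_gt_imp_ge_of_dense
  intro c hc
  rcases eq_top_or_lt_top c with rfl | hctop
  · exact le_top
  have hcbot : c ≠ ⊥ := by
    intro h; rw [h] at hc; exact (not_lt_bot hc).elim
  lift c to ℝ using ⟨hctop.ne, hcbot⟩ with r
  have hMr : M < r := by exact_mod_cast hc
  have hev : ∀ᶠ k in atTop, x k < r :=
    eventually_lt_of_limsup_lt (lt_of_le_of_lt hLM hMr) hbdd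
  have hev' : ∀ᶠ k in atTop, (fun k : ℤ => ((x k : EReal))) k ≤ ((r : ℝ) : EReal) := by
    filter_upwards [hev] with k hk
    exact_mod_cast hk.le
  exact limsup_le_of_le isCobounded_le_of_bot hev'
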